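/- Let G be a group. A subset A ⊆ G is left piecewise syndetic if and only if there exists an ultrafilter p in the smallest two-sided ideal K(βG, •) with A ∈ p. Moreover, for such p, the set L_A = { x ∈ G : Ax⁻¹ ∈ p } is left syndetic. -/
import Mathlib


/-- `A` is left syndetic: finitely many right translates `Ah⁻¹` cover `G`. -/
def leftSyndetic {G : Type*} [Group G] (A : Set G) : Prop :=
  ∃ H : Finset G, ∀ g : G, ∃ h ∈ H, g * h ∈ A

/-- `A` is left thick: for every finite `F ⊆ G` there is `x` with `xF ⊆ A`. -/
def leftThick {G : Type*} [Group G] (A : Set G) : Prop :=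
  ∀ F : Finset G, ∃ x : G, ∀ f ∈ F, x * f ∈ A

/-- `A` is left piecewise syndetic: `⋃_{h ∈ H} Ah⁻¹` is left thick for some finite `H`. -/
def leftPiecewiseSyndetic {G : Type*} [Group G] (A : Set G) : Prop :=
  ∃ H : Finset G, leftThick { g : G | ∃ h ∈ H, g * h ∈ A }

/-- The operation `p • q` on ultrafilters: `A ∈ p • q ↔ {x | Ax⁻¹ ∈ p} ∈ q`. -/
def umul {G : Type*} [Group G] (p q : Ultrafilter G) : Ultrafilter G :=
  q.bind fun x => p.map (· * x)

/-- The smallest two-sided ideal `K(βG, •)`, as the intersection of all two-sided ideals. -/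
def minimalIdeal (G : Type*) [Group G] : Set (Ultrafilter G) :=
  ⋂₀ { I : Set (Ultrafilter G) |
        I.Nonempty ∧ ∀ p ∈ I, ∀ q : Ultrafilter G, umul p q ∈ I ∧ umul q p ∈ I }

section Aux

variable {G : Type*} [Group G]

theorem mem_umul {A : Set G} {p q : Ultrafilter G} :
    A ∈ umul p q ↔ {x : G | {a : G | a * x ∈ A} ∈ p} ∈ q := by
  show A ∈ (Filter.bind ↑q fun x => ↑(p.map (· * x))) ↔ _
  rw [Filter.mem_bind']
  rfl

theorem umul_assoc (p q r : Ultrafilter G) : umul (umul p q) r = umul p (umul q r) := by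
  ext A
  simp only [mem_umul, Set.mem_setOf_eq, mul_assoc]

/-- Right ideal predicate. -/
def isRI (R : Set (Ultrafilter G)) : Prop := ∀ p ∈ R, ∀ q : Ultrafilter G, umul p q ∈ R

theorem isRI_range (p : Ultrafilter G) : isRI (Set.range (umul p)) := by
  rintro _ ⟨q, rfl⟩ r
  exact ⟨umul q r, (umul_assoc p q r).symm⟩

theorem continuous_umul (p : Ultrafilter G) : Continuous (umul p) := by
  rw [ultrafilterBasis_is_basis.continuous_iff]
  rintro _ ⟨s, rfl⟩
  have h : (umul p) ⁻¹' {u : Ultrafilter G | s ∈ u} =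
      {q : Ultrafilter G | {x : G | {a : G | a * x ∈ s} ∈ p} ∈ q} :=
    Set.ext fun q => mem_umul
  rw [h]
  exact ultrafilter_isOpen_basic _

theorem isClosed_range_umul (p : Ultrafilter G) : IsClosed (Set.range (umul p)) :=
  (isCompact_range (continuous_umul p)).isClosed

/-- Minimal right ideal. -/
def minRI (R : Set (Ultrafilter G)) : Prop :=
  R.Nonempty ∧ isRI R ∧
    ∀ R' : Set (Ultrafilter G), R'.Nonempty → isRI R' → R' ⊆ R → R' = R

theorem range_subset_of_mem {R : Set (Ultrafilter G)} (hri : isRI R) {p : Ultrafilter G}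
    (hp : p ∈ R) : Set.range (umul p) ⊆ R := by
  rintro _ ⟨q, rfl⟩; exact hri p hp q

theorem minRI.range_eq {R : Set (Ultrafilter G)} (hR : minRI R) {p : Ultrafilter G}
    (hp : p ∈ R) : Set.range (umul p) = R :=
  hR.2.2 _ ⟨umul p p, p, rfl⟩ (isRI_range p) (range_subset_of_mem hR.2.1 hp)

theorem exists_minRI (R0 : Set (Ultrafilter G)) (h0 : R0.Nonempty) (hc0 : IsClosed R0)
    (hRI0 : isRI R0) : ∃ R ⊆ R0, minRI R := by
  set S := {R : Set (Ultrafilter G) | R.Nonempty ∧ IsClosed R ∧ isRI R} with hS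
  have hchains : ∀ c ⊆ S, IsChain (· ⊆ ·) c → c.Nonempty →
      ∃ lb ∈ S, ∀ s ∈ c, lb ⊆ s := by
    intro c hcS hchain hcne
    have : Nonempty c := hcne.to_subtype
    refine ⟨⋂₀ c, ⟨?_, isClosed_sInter fun s hs => (hcS hs).2.1, ?_⟩,
      fun s hs => Set.sInter_subset_of_mem hs⟩
    · have hdir : Directed (· ⊇ ·) (fun i : c => (i : Set (Ultrafilter G))) := by
        intro i j
        rcases hchain.total i.2 j.2 with h | h
        · exact ⟨i, subset_rfl, h⟩
        · exact ⟨j, h, subset_rfl⟩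
      have hne := IsCompact.nonempty_iInter_of_directed_nonempty_isCompact_isClosed
        (fun i : c => (i : Set (Ultrafilter G))) hdir (fun i => (hcS i.2).1)
        (fun i => (hcS i.2).2.1.isCompact) (fun i => (hcS i.2).2.1)
      rwa [Set.sInter_eq_iInter]
    · intro p hp q s hs
      exact (hcS hs).2.2 p (hp s hs) q
  obtain ⟨m, hm0, hm⟩ := zorn_superset_nonempty S hchains R0 ⟨h0, hc0, hRI0⟩
  · obtain ⟨⟨hne, hcl, hri⟩, hmin⟩ := hm
    refine ⟨m, hm0, hne, hri, fun R' hne' hri' hsub => ?_⟩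
    obtain ⟨s, hs⟩ := hne'
    have hrange : Set.range (umul s) ⊆ R' := range_subset_of_mem hri' hs
    have hmem : Set.range (umul s) ∈ S :=
      ⟨⟨umul s s, s, rfl⟩, isClosed_range_umul s, isRI_range s⟩
    have := hmin hmem (hrange.trans hsub)
    exact subset_antisymm hsub (this.trans hrange)

theorem minRI_image {R : Set (Ultrafilter G)} (hR : minRI R) (q : Ultrafilter G) :
    minRI (umul q '' R) := by
  obtain ⟨hne, hri, hmin⟩ := hR
  refine ⟨hne.image _, ?_, ?_⟩
  · rintro _ ⟨r, hr, rfl⟩ s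
    exact ⟨umul r s, hri r hr s, (umul_assoc q r s).symm⟩
  · intro R' hne' hri' hsub
    obtain ⟨x, hx⟩ := hne'
    obtain ⟨r0, hr0, hx0⟩ := hsub hx
    have hT : {x ∈ R | umul q x ∈ R'} = R := by
      refine hmin _ ⟨r0, hr0, hx0 ▸ hx⟩ ?_ fun x hx => hx.1
      rintro x ⟨hxR, hxR'⟩ s
      exact ⟨hri x hxR s, by rw [← umul_assoc]; exact hri' _ hxR' s⟩
    refine subset_antisymm hsub ?_
    rintro _ ⟨r, hr, rfl⟩
    rw [← hT] at hr
    exact hr.2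

/-- The union of all minimal right ideals. -/
def bigK (G : Type*) [Group G] : Set (Ultrafilter G) := {p | ∃ R, minRI R ∧ p ∈ R}

theorem bigK_nonempty : (bigK G).Nonempty := by
  obtain ⟨R, -, hR⟩ := exists_minRI (Set.univ : Set (Ultrafilter G))
    ⟨pure 1, trivial⟩ isClosed_univ (fun _ _ _ => trivial)
  obtain ⟨p, hp⟩ := hR.1
  exact ⟨p, R, hR, hp⟩

theorem bigK_ideal : ∀ p ∈ bigK G, ∀ q : Ultrafilter G,
    umul p q ∈ bigK G ∧ umul q p ∈ bigK G := by
  rintro p ⟨R, hR, hp⟩ q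
  exact ⟨⟨R, hR, hR.2.1 p hp q⟩, ⟨umul q '' R, minRI_image hR q, p, hp, rfl⟩⟩

theorem bigK_subset {I : Set (Ultrafilter G)} (hne : I.Nonempty)
    (hI : ∀ p ∈ I, ∀ q : Ultrafilter G, umul p q ∈ I ∧ umul q p ∈ I) :
    bigK G ⊆ I := by
  rintro p ⟨R, hR, hp⟩
  obtain ⟨i, hi⟩ := hne
  have h1 : umul p i ∈ R ∩ I := ⟨hR.2.1 p hp i, (hI i hi p).2⟩
  have : R ∩ I = R := by
    refine hR.2.2 _ ⟨_, h1⟩ ?_ Set.inter_subset_left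
    rintro x ⟨hxR, hxI⟩ s
    exact ⟨hR.2.1 x hxR s, (hI x hxI s).1⟩
  rw [← this] at hp
  exact hp.2

/-- From a finite-intersection-type hypothesis, build an ultrafilter containing all `D h`. -/
theorem exists_ultrafilter_forall (D : G → Set G)
    (h : ∀ H : Finset G, ∃ g, ∀ h ∈ H, g ∈ D h) :
    ∃ q : Ultrafilter G, ∀ h : G, D h ∈ q := by
  have hgen : (Filter.generate (Set.range D)).NeBot := by
    rw [Filter.generate_neBot_iff]
    intro t hts htf
    have hch : ∀ s ∈ t, ∃ g : G, s = D g := fun s hs => by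
      obtain ⟨g, hg⟩ := hts hs; exact ⟨g, hg.symm⟩
    classical
    set f : Set G → G := fun s => if hs : ∃ g, s = D g then hs.choose else 1 with hf
    obtain ⟨g, hg⟩ := h (htf.toFinset.image f)
    refine ⟨g, fun s hs => ?_⟩
    have h1 : s = D (f s) := by
      have h2 := hch s hs
      simp only [hf, dif_pos h2]
      exact h2.choose_spec
    rw [h1]
    exact hg (f s) (Finset.mem_image_of_mem f (htf.mem_toFinset.2 hs))
  exact ⟨Ultrafilter.of (Filter.generate (Set.range D)), fun h =>
    (Ultrafilter.of_le _) (Filter.mem_generate_of_mem ⟨h, rfl⟩)⟩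

theorem syndetic_of_bigK {A : Set G} {p : Ultrafilter G} (hp : p ∈ bigK G) (hA : A ∈ p) :
    leftSyndetic {x : G | {a : G | a * x ∈ A} ∈ p} := by
  by_contra hns
  set L := {x : G | {a : G | a * x ∈ A} ∈ p} with hL
  simp only [leftSyndetic] at hns
  push_neg at hns
  have hns' : ∀ H : Finset G, ∃ g, ∀ h ∈ H, g ∈ {g : G | g * h ∉ L} := by
    intro H
    obtain ⟨g, hg⟩ := hns H
    exact ⟨g, fun h hh => hg h hh⟩
  obtain ⟨q, hq⟩ := exists_ultrafilter_forall _ hns'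
  obtain ⟨R, hR, hpR⟩ := hp
  have hpq : umul p q ∈ R := hR.2.1 p hpR q
  have : p ∈ Set.range (umul (umul p q)) := by rw [hR.range_eq hpq]; exact hpR
  obtain ⟨r, hr⟩ := this
  rw [umul_assoc] at hr
  have hAp : A ∈ umul p (umul q r) := by rw [hr]; exact hA
  rw [mem_umul] at hAp
  have hLqr : L ∈ umul q r := hAp
  rw [mem_umul] at hLqr
  obtain ⟨x, hx⟩ := Ultrafilter.nonempty_of_mem hLqr
  have h1 : {a : G | a * x ∈ L} ∈ q := hx
  have h2 : {g : G | g * x ∉ L} ∈ q := hq x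
  obtain ⟨a, ha1, ha2⟩ := Ultrafilter.nonempty_of_mem (Filter.inter_mem h1 h2)
  exact ha2 ha1

theorem minimalIdeal_eq_bigK : minimalIdeal G = bigK G := by
  refine subset_antisymm (Set.sInter_subset_of_mem ⟨bigK_nonempty, bigK_ideal⟩) ?_
  exact Set.subset_sInter fun I hI => bigK_subset hI.1 hI.2

theorem pws_of_syndetic {A : Set G} (p : Ultrafilter G)
    (hs : leftSyndetic {x : G | {a : G | a * x ∈ A} ∈ p}) : leftPiecewiseSyndetic A := by
  obtain ⟨H, hH⟩ := hs
  refine ⟨H, fun F => ?_⟩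
  classical
  choose hf hfH hfL using hH
  have hmem : (⋂ f ∈ (F : Set G), {a : G | a * (f * hf f) ∈ A}) ∈ p :=
    (Filter.biInter_mem F.finite_toSet).2 fun f _ => hfL f
  obtain ⟨a, ha⟩ := Ultrafilter.nonempty_of_mem hmem
  refine ⟨a, fun f hff => ⟨hf f, hfH f, ?_⟩⟩
  rw [mul_assoc]
  have := Set.mem_iInter₂.1 ha f hff
  exact this

theorem exists_bigK_of_pws {A : Set G} (hA : leftPiecewiseSyndetic A) :
    ∃ p ∈ bigK G, A ∈ p := by
  obtain ⟨H, hth⟩ := hA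
  set B := {g : G | ∃ h ∈ H, g * h ∈ A} with hB
  have hq : ∃ q : Ultrafilter G, ∀ f : G, {x : G | x * f ∈ B} ∈ q := by
    apply exists_ultrafilter_forall
    intro F
    obtain ⟨x, hx⟩ := hth F
    exact ⟨x, fun f hf => hx f hf⟩
  obtain ⟨q, hq⟩ := hq
  obtain ⟨R, hRsub, hR⟩ := exists_minRI (Set.range (umul q)) ⟨umul q q, q, rfl⟩
    (isClosed_range_umul q) (isRI_range q)
  obtain ⟨p', hp'⟩ := hR.1
  have hp'K : p' ∈ bigK G := ⟨R, hR, hp'⟩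
  have hBp' : B ∈ p' := by
    obtain ⟨r, hr⟩ := hRsub hp'
    rw [← hr, mem_umul]
    have : {x : G | {a : G | a * x ∈ B} ∈ q} = Set.univ := by
      ext x
      simp only [Set.mem_univ, iff_true, Set.mem_setOf_eq]
      exact hq x
    rw [this]
    exact Filter.univ_mem
  have hBU : B = ⋃ h ∈ (H : Set G), {g : G | g * h ∈ A} := by
    ext g
    simp [hB]
  rw [hBU] at hBp'
  obtain ⟨h, hh, hhA⟩ := (Ultrafilter.finite_biUnion_mem_iff H.finite_toSet).1 hBp'
  refine ⟨umul p' (pure h), (bigK_ideal p' hp'K (pure h)).1, ?_⟩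
  rw [mem_umul]
  exact hhA

end Aux

/-- `A` is left piecewise syndetic iff some `p ∈ K(βG, •)` contains `A`; and for such `p`
the return set `L_A = {x : Ax⁻¹ ∈ p}` is left syndetic. -/
theorem stmt12 {G : Type*} [Group G] (A : Set G) :
    (leftPiecewiseSyndetic A ↔ ∃ p ∈ minimalIdeal G, A ∈ p) ∧
      (∀ p ∈ minimalIdeal G, A ∈ p →
        leftSyndetic { x : G | { a : G | a * x ∈ A } ∈ p }) := by
  have hpart2 : ∀ p ∈ minimalIdeal G, A ∈ p →
      leftSyndetic { x : G | { a : G | a * x ∈ A } ∈ p } := by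
    intro p hp hA
    rw [minimalIdeal_eq_bigK] at hp
    exact syndetic_of_bigK hp hA
  refine ⟨⟨fun h => ?_, fun ⟨p, hp, hA⟩ => pws_of_syndetic p (hpart2 p hp hA)⟩, hpart2⟩
  obtain ⟨p, hp, hA⟩ := exists_bigK_of_pws h
  rw [← minimalIdeal_eq_bigK] at hp
  exact ⟨p, hp, hA⟩
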